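/- Let A be a convex set of N real numbers. Then the additive energy satisfies E(A) ≤ C · N^{5/2} for some absolute constant C, where E(A) is the number of quadruples (a_1, a_2, a_1', a_2') ∈ A^4 with a_1 + a_2 = a_1' + a_2'. -/

import Mathlib

open Finset

namespace Stmt11Aux

def W (n : ℕ) : Finset (ℕ × ℕ) :=
  (Finset.range n ×ˢ Finset.range n).filter fun p => p.1 < p.2

def val (a : ℕ → ℝ) (w : ℕ × ℕ) : ℝ := a w.2 - a w.1

def gap (w : ℕ × ℕ) : ℕ := w.2 - w.1

lemma mem_W {n : ℕ} {w : ℕ × ℕ} : w ∈ W n ↔ w.1 < w.2 ∧ w.2 < n := by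
  constructor
  · intro h; simp only [W, mem_filter, mem_product, mem_range] at h; exact ⟨h.2, h.1.2⟩
  · intro h; simp only [W, mem_filter, mem_product, mem_range]
    exact ⟨⟨by omega, h.2⟩, h.1⟩

section Seq

def Mono (n : ℕ) (a : ℕ → ℝ) : Prop := ∀ i j, i < j → j < n → a i < a j
def Convexa (n : ℕ) (a : ℕ → ℝ) : Prop :=
  ∀ i, i + 2 < n → a (i+1) - a i < a (i+2) - a (i+1)

variable {n : ℕ} {a : ℕ → ℝ}

lemma mono_le (hm : Mono n a) {i j : ℕ} (hij : i ≤ j) (hj : j < n) : a i ≤ a j := by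
  rcases eq_or_lt_of_le hij with h | h
  · rw [h]
  · exact (hm i j h hj).le

lemma a_inj (hm : Mono n a) {i j : ℕ} (hi : i < n) (hj : j < n) (h : a i = a j) : i = j := by
  rcases lt_trichotomy i j with hlt | he | hgt
  · exact absurd h (ne_of_lt (hm i j hlt hj))
  · exact he
  · exact absurd h.symm (ne_of_lt (hm j i hgt hi))

lemma dlt (hm : Mono n a) (hc : Convexa n a) :
    ∀ i j, i < j → j + 1 < n → a (i+1) - a i < a (j+1) - a j := by
  intro i j hij hjn
  induction j with
  | zero => omega
  | succ m ih =>
    rcases Nat.lt_or_ge i m with h | h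
    · exact lt_trans (ih h (by omega)) (hc m (by omega))
    · have : i = m := by omega
      subst this
      exact hc i (by omega)

lemma telescope (a : ℕ → ℝ) :
    ∀ (g i : ℕ), a (i+g) - a i = ∑ x ∈ Finset.range g, (a (i+x+1) - a (i+x)) := by
  intro g
  induction g with
  | zero => simp
  | succ m ih =>
    intro i
    rw [Finset.sum_range_succ, ← ih i]
    have h : i + (m+1) = i + m + 1 := by omega
    rw [h]; ring

lemma shift_lt (hm : Mono n a) (hc : Convexa n a) {i i' g : ℕ}
    (hii : i < i') (hg : 1 ≤ g) (hbound : i' + g < n) :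
    a (i+g) - a i < a (i'+g) - a i' := by
  rw [telescope a g i, telescope a g i']
  refine Finset.sum_lt_sum_of_nonempty (by simp [Finset.nonempty_range_iff]; omega) ?_
  intro x hx
  simp only [Finset.mem_range] at hx
  have h1 : i + x < i' + x := by omega
  have h2 : (i' + x) + 1 < n := by omega
  exact dlt hm hc (i+x) (i'+x) h1 h2

lemma shift_unique (hm : Mono n a) (hc : Convexa n a) {i i' g : ℕ}
    (hg : 1 ≤ g) (hi : i + g < n) (hi' : i' + g < n)
    (h : a (i+g) - a i = a (i'+g) - a i') : i = i' := by
  rcases lt_trichotomy i i' with hlt | he | hgt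
  · exact absurd h (ne_of_lt (shift_lt hm hc hlt hg hi'))
  · exact he
  · exact absurd h.symm (ne_of_lt (shift_lt hm hc hgt hg hi))

lemma staircase (hm : Mono n a) (hc : Convexa n a) {w w' : ℕ × ℕ}
    (hw : w ∈ W n) (hw' : w' ∈ W n) (hval : val a w = val a w')
    (hgap : gap w < gap w') : w'.1 < w.1 ∧ w'.2 < w.2 := by
  obtain ⟨hw1, hw2⟩ := mem_W.mp hw
  obtain ⟨hw1', hw2'⟩ := mem_W.mp hw'
  have h1 : w'.1 < w.1 := by
    by_contra hcon
    push_neg at hcon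
    set g := gap w with hg
    have hgw : w.2 = w.1 + g := by simp only [hg, gap]; omega
    have hmid : w'.1 + g < w'.2 := by simp only [gap] at hgap ⊢; omega
    have hA : a (w.1 + g) - a w.1 ≤ a (w'.1 + g) - a w'.1 := by
      rcases eq_or_lt_of_le hcon with he | hlt
      · rw [he]
      · exact (shift_lt hm hc hlt (by simp only [hg, gap]; omega) (by omega)).le
    have hB : a (w'.1 + g) - a w'.1 < a w'.2 - a w'.1 := by
      have := hm (w'.1 + g) w'.2 hmid hw2'
      linarith
    rw [← hgw] at hA
    simp only [val] at hval
    linarith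
  refine ⟨h1, ?_⟩
  by_contra hcon
  push_neg at hcon
  have hr : a w.2 ≤ a w'.2 := mono_le hm hcon hw2'
  have hi : a w'.1 < a w.1 := hm _ _ h1 (by omega)
  simp only [val] at hval
  linarith

lemma window_unique (hm : Mono n a) (hc : Convexa n a) {w w' : ℕ × ℕ}
    (hw : w ∈ W n) (hw' : w' ∈ W n) (hval : val a w = val a w')
    (hgap : gap w = gap w') : w = w' := by
  obtain ⟨hw1, hw2⟩ := mem_W.mp hw
  obtain ⟨hw1', hw2'⟩ := mem_W.mp hw'
  have hrew : w.2 = w.1 + gap w := by simp only [gap]; omega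
  have hrew' : w'.2 = w'.1 + gap w' := by simp only [gap]; omega
  have h1 : w.1 = w'.1 := by
    apply shift_unique hm hc (g := gap w) (by simp only [gap]; omega)
      (by omega) (by rw [hgap] at *; omega)
    simp only [val] at hval
    rw [← hrew]
    rw [hgap, ← hrew']
    exact hval
  have h2 : w.2 = w'.2 := by rw [hrew, hrew', h1, hgap]
  exact Prod.ext h1 h2

end Seq

noncomputable def Fibt (n : ℕ) (a : ℕ → ℝ) (t : ℝ) : Finset (ℕ × ℕ) :=
  (W n).filter fun w => val a w = t

noncomputable def mult (n : ℕ) (a : ℕ → ℝ) (w : ℕ × ℕ) : ℕ := (Fibt n a (val a w)).card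

def SuccP (n : ℕ) (a : ℕ → ℝ) (w w' : ℕ × ℕ) : Prop :=
  gap w < gap w' ∧
    ∀ w'' ∈ W n, val a w'' = val a w → ¬(gap w < gap w'' ∧ gap w'' < gap w')

noncomputable instance (n : ℕ) (a : ℕ → ℝ) (w w' : ℕ × ℕ) : Decidable (SuccP n a w w') := by
  unfold SuccP; infer_instance

noncomputable def SP (n : ℕ) (a : ℕ → ℝ) : Finset ((ℕ × ℕ) × (ℕ × ℕ)) :=
  ((W n) ×ˢ (W n)).filter fun q => val a q.2 = val a q.1 ∧ SuccP n a q.1 q.2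

noncomputable def SPt (n : ℕ) (a : ℕ → ℝ) (t : ℝ) : Finset ((ℕ × ℕ) × (ℕ × ℕ)) :=
  (SP n a).filter fun q => val a q.1 = t

def alp (q : (ℕ × ℕ) × (ℕ × ℕ)) : ℕ := q.1.1 - q.2.1
def bet (q : (ℕ × ℕ) × (ℕ × ℕ)) : ℕ := q.1.2 - q.2.2

section Fiber
variable {n : ℕ} {a : ℕ → ℝ}

lemma mem_Fibt {t : ℝ} {w : ℕ × ℕ} : w ∈ Fibt n a t ↔ w ∈ W n ∧ val a w = t := by
  simp [Fibt]

lemma mult_congr {w w' : ℕ × ℕ} (h : val a w' = val a w) :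
    mult n a w' = mult n a w := by
  simp [mult, h]

lemma mult_le (hm : Mono n a) (hc : Convexa n a) (w : ℕ × ℕ) : mult n a w ≤ n := by
  have := Finset.card_le_card_of_injOn gap
    (fun w' hw' => by
      have hv := mem_Fibt.mp hw'
      have h2 := (mem_W.mp hv.1).2
      have h1 := (mem_W.mp hv.1).1
      simp only [mem_coe, mem_range, gap]; omega)
    (fun w1 h1 w2 h2 hgap => by
      simp only [coe_filter, Set.mem_setOf_eq, Fibt, mem_coe, mem_filter] at h1 h2
      exact window_unique hm hc h1.1 h2.1 (h1.2.trans h2.2.symm) hgap)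
    (s := Fibt n a (val a w)) (t := Finset.range n)
  simpa [mult] using this

lemma mult_pos {w : ℕ × ℕ} (hw : w ∈ W n) : 1 ≤ mult n a w := by
  refine Finset.card_pos.mpr ⟨w, ?_⟩
  simp [Fibt, hw]

lemma succ_unique (hm : Mono n a) (hc : Convexa n a) {w w' w'' : ℕ × ℕ}
    (hw' : w' ∈ W n) (hw'' : w'' ∈ W n)
    (hv' : val a w' = val a w) (hv'' : val a w'' = val a w)
    (h1 : SuccP n a w w') (h2 : SuccP n a w w'') : w' = w'' := by
  have ha := h1.2 w'' hw'' hv''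
  have hb := h2.2 w' hw' hv'
  have : gap w' = gap w'' := by
    have g1 := h1.1
    have g2 := h2.1
    by_contra hne
    rcases Nat.lt_or_ge (gap w') (gap w'') with h | h
    · exact hb ⟨g1, h⟩
    · exact ha ⟨g2, by omega⟩
  exact window_unique hm hc hw' hw'' (hv'.trans hv''.symm) this

lemma succ_exists (hm : Mono n a) (hc : Convexa n a) {w w'' : ℕ × ℕ}
    (hw : w ∈ W n) (hw'' : w'' ∈ W n) (hv : val a w'' = val a w)
    (hg : gap w < gap w'') :
    ∃ w', w' ∈ W n ∧ val a w' = val a w ∧ SuccP n a w w' := by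
  set C := (W n).filter (fun x => val a x = val a w ∧ gap w < gap x) with hC
  have hne : C.Nonempty := ⟨w'', by simp [hC, hw'', hv, hg]⟩
  obtain ⟨w', hw'C, hmin⟩ := Finset.exists_min_image C gap hne
  simp only [hC, mem_filter] at hw'C
  refine ⟨w', hw'C.1, hw'C.2.1, hw'C.2.2, ?_⟩
  intro x hx hvx hcon
  have hxC : x ∈ C := by simp [hC, hx, hvx, hcon.1]
  exact absurd (hmin x hxC) (by omega)

lemma mem_SPt {t : ℝ} {q : (ℕ × ℕ) × (ℕ × ℕ)} :
    q ∈ SPt n a t ↔ q.1 ∈ W n ∧ q.2 ∈ W n ∧ val a q.2 = val a q.1 ∧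
      SuccP n a q.1 q.2 ∧ val a q.1 = t := by
  simp only [SPt, SP, mem_filter, mem_product]
  tauto

lemma SPt_key (hm : Mono n a) (hc : Convexa n a) {t : ℝ}
    {q qt : (ℕ × ℕ) × (ℕ × ℕ)} (hq : q ∈ SPt n a t) (hqt : qt ∈ SPt n a t)
    (hgap : gap q.1 < gap qt.1) : qt.1.1 ≤ q.2.1 ∧ qt.1.2 ≤ q.2.2 := by
  obtain ⟨hq1, hq2, hqv, hqs, hqt1⟩ := mem_SPt.mp hq
  obtain ⟨hp1, hp2, hpv, hps, hpt1⟩ := mem_SPt.mp hqt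
  have hvv : val a qt.1 = val a q.1 := by rw [hqt1, hpt1]
  have hnb := hqs.2 qt.1 hp1 hvv
  have hge : gap q.2 ≤ gap qt.1 := by
    by_contra hcon
    exact hnb ⟨hgap, by omega⟩
  rcases eq_or_lt_of_le hge with he | hlt
  · have : q.2 = qt.1 := window_unique hm hc hq2 hp1 (by rw [hqv, hvv]) he
    rw [← this]
    exact ⟨le_refl _, le_refl _⟩
  · have := staircase hm hc hq2 hp1 (by rw [hqv, hvv]) hlt
    exact ⟨this.1.le, this.2.le⟩

lemma SPt_fst_inj (hm : Mono n a) (hc : Convexa n a) {t : ℝ}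
    {q qt : (ℕ × ℕ) × (ℕ × ℕ)} (hq : q ∈ SPt n a t) (hqt : qt ∈ SPt n a t)
    (h : q.1 = qt.1) : q = qt := by
  obtain ⟨hq1, hq2, hqv, hqs, hqt1⟩ := mem_SPt.mp hq
  obtain ⟨hp1, hp2, hpv, hps, hpt1⟩ := mem_SPt.mp hqt
  have h2 : q.2 = qt.2 := by
    refine succ_unique hm hc (w := q.1) hq2 hp2 hqv ?_ hqs ?_
    · rw [hpv, h]
    · rw [h]; exact hps
  exact Prod.ext h h2

lemma SPt_gap_ne (hm : Mono n a) (hc : Convexa n a) {t : ℝ}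
    {q qt : (ℕ × ℕ) × (ℕ × ℕ)} (hq : q ∈ SPt n a t) (hqt : qt ∈ SPt n a t)
    (h : q ≠ qt) : gap q.1 ≠ gap qt.1 := by
  intro hgap
  obtain ⟨hq1, _, _, _, hqt1⟩ := mem_SPt.mp hq
  obtain ⟨hp1, _, _, _, hpt1⟩ := mem_SPt.mp hqt
  have : q.1 = qt.1 := window_unique hm hc hq1 hp1 (by rw [hqt1, hpt1]) hgap
  exact h (SPt_fst_inj hm hc hq hqt this)


lemma sum_alp (hm : Mono n a) (hc : Convexa n a) {t : ℝ} :
    (∑ q ∈ SPt n a t, alp q) ≤ n := by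
  classical
  have hdisj : ∀ q ∈ SPt n a t, ∀ qt ∈ SPt n a t, q ≠ qt →
      Disjoint (Finset.Ico q.2.1 q.1.1) (Finset.Ico qt.2.1 qt.1.1) := by
    intro q hq qt hqt hne
    have hgne := SPt_gap_ne hm hc hq hqt hne
    rcases Nat.lt_or_ge (gap q.1) (gap qt.1) with h | h
    · have hkey := (SPt_key hm hc hq hqt h).1
      rw [Finset.disjoint_left]
      intro x hx1 hx2
      simp only [mem_Ico] at hx1 hx2
      omega
    · have hlt : gap qt.1 < gap q.1 := by omega
      have hkey := (SPt_key hm hc hqt hq hlt).1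
      rw [Finset.disjoint_left]
      intro x hx1 hx2
      simp only [mem_Ico] at hx1 hx2
      omega
  calc (∑ q ∈ SPt n a t, alp q)
      = ∑ q ∈ SPt n a t, (Finset.Ico q.2.1 q.1.1).card := by
        refine Finset.sum_congr rfl fun q hq => ?_
        rw [Nat.card_Ico]; rfl
    _ = ((SPt n a t).biUnion fun q => Finset.Ico q.2.1 q.1.1).card :=
        (Finset.card_biUnion hdisj).symm
    _ ≤ (Finset.range n).card := by
        apply Finset.card_le_card
        intro x hx
        simp only [Finset.mem_biUnion, mem_Ico] at hx
        obtain ⟨q, hq, hx1, hx2⟩ := hx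
        have h1 := (mem_W.mp (mem_SPt.mp hq).1).1
        have h2 := (mem_W.mp (mem_SPt.mp hq).1).2
        simp only [mem_range]; omega
    _ = n := Finset.card_range n

lemma sum_bet (hm : Mono n a) (hc : Convexa n a) {t : ℝ} :
    (∑ q ∈ SPt n a t, bet q) ≤ n := by
  classical
  have hdisj : ∀ q ∈ SPt n a t, ∀ qt ∈ SPt n a t, q ≠ qt →
      Disjoint (Finset.Ico q.2.2 q.1.2) (Finset.Ico qt.2.2 qt.1.2) := by
    intro q hq qt hqt hne
    have hgne := SPt_gap_ne hm hc hq hqt hne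
    rcases Nat.lt_or_ge (gap q.1) (gap qt.1) with h | h
    · have hkey := (SPt_key hm hc hq hqt h).2
      rw [Finset.disjoint_left]
      intro x hx1 hx2
      simp only [mem_Ico] at hx1 hx2
      omega
    · have hlt : gap qt.1 < gap q.1 := by omega
      have hkey := (SPt_key hm hc hqt hq hlt).2
      rw [Finset.disjoint_left]
      intro x hx1 hx2
      simp only [mem_Ico] at hx1 hx2
      omega
  calc (∑ q ∈ SPt n a t, bet q)
      = ∑ q ∈ SPt n a t, (Finset.Ico q.2.2 q.1.2).card := by
        refine Finset.sum_congr rfl fun q hq => ?_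
        rw [Nat.card_Ico]; rfl
    _ = ((SPt n a t).biUnion fun q => Finset.Ico q.2.2 q.1.2).card :=
        (Finset.card_biUnion hdisj).symm
    _ ≤ (Finset.range n).card := by
        apply Finset.card_le_card
        intro x hx
        simp only [Finset.mem_biUnion, mem_Ico] at hx
        obtain ⟨q, hq, hx1, hx2⟩ := hx
        have h2 := (mem_W.mp (mem_SPt.mp hq).1).2
        simp only [mem_range]; omega
    _ = n := Finset.card_range n

lemma card_Bt (hm : Mono n a) (hc : Convexa n a) {k : ℕ} {t : ℝ}
    (hn : 1 ≤ n) (hk : 1 ≤ k) :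
    4 * ((SPt n a t).filter fun q => 8*n < k*(alp q + bet q)).card < k := by
  classical
  set B := (SPt n a t).filter fun q => 8*n < k*(alp q + bet q) with hB
  rcases B.eq_empty_or_nonempty with he | hne
  · rw [he]; simp; omega
  have h1 : (∑ _q ∈ B, 8 * n) < ∑ q ∈ B, k * (alp q + bet q) := by
    refine Finset.sum_lt_sum_of_nonempty hne fun q hq => ?_
    exact (Finset.mem_filter.mp hq).2
  have h2 : (∑ q ∈ B, k * (alp q + bet q)) ≤ ∑ q ∈ SPt n a t, k * (alp q + bet q) :=
    Finset.sum_le_sum_of_subset (Finset.filter_subset _ _)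
  have h3 : (∑ q ∈ SPt n a t, k * (alp q + bet q)) = k * ∑ q ∈ SPt n a t, (alp q + bet q) :=
    (Finset.mul_sum _ _ _).symm
  have h4 : (∑ q ∈ SPt n a t, (alp q + bet q)) ≤ 2 * n := by
    rw [Finset.sum_add_distrib]
    have := sum_alp hm hc (t := t) (n := n) (a := a)
    have := sum_bet hm hc (t := t) (n := n) (a := a)
    omega
  have h5 : (∑ _q ∈ B, 8 * n) = B.card * (8 * n) := by
    rw [Finset.sum_const, smul_eq_mul]
  have h6 : B.card * (8 * n) < k * (2 * n) := by
    calc B.card * (8*n) = ∑ _q ∈ B, 8 * n := h5.symm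
      _ < ∑ q ∈ B, k * (alp q + bet q) := h1
      _ ≤ k * ∑ q ∈ SPt n a t, (alp q + bet q) := by rw [← h3]; exact h2
      _ ≤ k * (2 * n) := Nat.mul_le_mul_left k h4
  have h7 : (2*n) * (4 * B.card) < (2*n) * k := by
    calc (2*n) * (4 * B.card) = B.card * (8 * n) := by ring
      _ < k * (2*n) := h6
      _ = (2*n) * k := by ring
  exact Nat.lt_of_mul_lt_mul_left h7

lemma card_SPt_ge (hm : Mono n a) (hc : Convexa n a) {t : ℝ} :
    (Fibt n a t).card ≤ (SPt n a t).card + 1 := by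
  classical
  set F := Fibt n a t with hF
  have h1 : (F.filter fun w => ∃ w' ∈ F, gap w < gap w').card ≤ (SPt n a t).card := by
    apply Finset.card_le_card_of_surjOn (fun q => q.1)
    intro w hw
    simp only [coe_filter, Set.mem_setOf_eq] at hw
    obtain ⟨hwF, w'', hw''F, hgap⟩ := hw
    have hwW := (mem_Fibt.mp hwF).1
    have hwt := (mem_Fibt.mp hwF).2
    have hw''W := (mem_Fibt.mp hw''F).1
    have hw''t := (mem_Fibt.mp hw''F).2
    obtain ⟨w', hw'W, hw'v, hsucc⟩ :=
      succ_exists hm hc hwW hw''W (by rw [hw''t, hwt]) hgap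
    refine ⟨(w, w'), ?_, rfl⟩
    simp only [Set.mem_preimage, mem_coe]
    exact mem_SPt.mpr ⟨hwW, hw'W, hw'v, hsucc, hwt⟩
  have h2 : (F.filter fun w => ¬ ∃ w' ∈ F, gap w < gap w').card ≤ 1 := by
    rw [Finset.card_le_one]
    intro x hx y hy
    simp only [mem_filter, not_exists, not_and, not_lt] at hx hy
    have hxF := hx.1; have hyF := hy.1
    have hgap : gap x = gap y := by
      have h1 := hx.2 y hyF
      have h2 := hy.2 x hxF
      omega
    exact window_unique hm hc (mem_Fibt.mp hxF).1 (mem_Fibt.mp hyF).1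
      (by rw [(mem_Fibt.mp hxF).2, (mem_Fibt.mp hyF).2]) hgap
  have h3 := Finset.card_filter_add_card_filter_not
    (s := F) (p := fun w => ∃ w' ∈ F, gap w < gap w')
  omega

lemma per_fiber (hm : Mono n a) (hc : Convexa n a) {k : ℕ} {t : ℝ}
    (hk : 2 ≤ k) (hn : 1 ≤ n) (hF : k ≤ (Fibt n a t).card) :
    (Fibt n a t).card ≤
      4 * ((SPt n a t).filter fun q => ¬ 8*n < k*(alp q + bet q)).card := by
  classical
  have hsplit := Finset.card_filter_add_card_filter_not
    (s := SPt n a t) (p := fun q => 8*n < k*(alp q + bet q))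
  have hB := card_Bt hm hc (k := k) (t := t) hn (by omega)
  have hS := card_SPt_ge hm hc (t := t) (n := n) (a := a)
  omega

end Fiber

noncomputable def Hk (n : ℕ) (a : ℕ → ℝ) (k : ℕ) : Finset (ℕ × ℕ) :=
  (W n).filter fun w => k ≤ mult n a w

noncomputable def GP (n : ℕ) (a : ℕ → ℝ) (k : ℕ) : Finset ((ℕ × ℕ) × (ℕ × ℕ)) :=
  (SP n a).filter fun q => k ≤ mult n a q.1 ∧ k * (alp q + bet q) ≤ 8*n

noncomputable def M (n : ℕ) (a : ℕ → ℝ) (k : ℕ) : ℕ := (Hk n a k).card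

noncomputable def P2set (n : ℕ) (a : ℕ → ℝ) : Finset ((ℕ × ℕ) × (ℕ × ℕ)) :=
  ((W n) ×ˢ (W n)).filter fun q => val a q.2 = val a q.1

noncomputable def Qd (n : ℕ) (a : ℕ → ℝ) : Finset ((ℕ × ℕ) × (ℕ × ℕ)) :=
  ((Finset.range n ×ˢ Finset.range n) ×ˢ (Finset.range n ×ˢ Finset.range n)).filter
    fun p => a p.1.1 + a p.1.2 = a p.2.1 + a p.2.2

section Global
variable {n : ℕ} {a : ℕ → ℝ}

lemma M_le_GP (hm : Mono n a) (hc : Convexa n a) {k : ℕ} (hk : 2 ≤ k) (hn : 1 ≤ n) :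
    M n a k ≤ 4 * (GP n a k).card := by
  classical
  set V := (Hk n a k).image (val a) with hV
  have h1 : M n a k = ∑ t ∈ V, ((Hk n a k).filter fun w => val a w = t).card :=
    Finset.card_eq_sum_card_fiberwise fun x hx => Finset.mem_image_of_mem _ hx
  have hmu : ∀ t ∈ V, ∀ w' : ℕ × ℕ, val a w' = t → k ≤ mult n a w' := by
    intro t ht w' hw'
    obtain ⟨w0, hw0, hval0⟩ := Finset.mem_image.mp ht
    have hw0' := (Finset.mem_filter.mp hw0).2
    have : mult n a w' = mult n a w0 := mult_congr (by rw [hw', ← hval0])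
    omega
  have hfib : ∀ t ∈ V, ((Hk n a k).filter fun w => val a w = t) = Fibt n a t := by
    intro t ht
    ext w'
    simp only [Finset.mem_filter, Hk, mem_Fibt]
    constructor
    · rintro ⟨⟨ha', _⟩, hb⟩; exact ⟨ha', hb⟩
    · rintro ⟨ha', hb⟩
      exact ⟨⟨ha', hmu t ht w' hb⟩, hb⟩
  have hcard : ∀ t ∈ V, k ≤ (Fibt n a t).card := by
    intro t ht
    obtain ⟨w0, hw0, hval0⟩ := Finset.mem_image.mp ht
    have hw0' := (Finset.mem_filter.mp hw0).2
    have : mult n a w0 = (Fibt n a t).card := by rw [mult, hval0]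
    omega
  have h2 : M n a k ≤ ∑ t ∈ V, 4 * ((SPt n a t).filter
      fun q => ¬ 8*n < k*(alp q + bet q)).card := by
    rw [h1]
    refine Finset.sum_le_sum fun t ht => ?_
    rw [hfib t ht]
    exact per_fiber hm hc hk hn (hcard t ht)
  have h3 : ∀ t ∈ V, ((SPt n a t).filter fun q => ¬ 8*n < k*(alp q + bet q)) ⊆
      (GP n a k).filter fun q => val a q.1 = t := by
    intro t ht q hq
    simp only [Finset.mem_filter, SPt] at hq
    obtain ⟨⟨hqSP, hqt⟩, hgood⟩ := hq
    simp only [Finset.mem_filter, GP]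
    refine ⟨⟨hqSP, ?_, by omega⟩, hqt⟩
    exact hmu t ht q.1 hqt
  have h4 : (∑ t ∈ V, ((GP n a k).filter fun q => val a q.1 = t).card) ≤
      (GP n a k).card := by
    set T := (GP n a k).filter fun q => val a q.1 ∈ V with hT
    have hTc : T.card = ∑ t ∈ V, (T.filter fun q => val a q.1 = t).card :=
      Finset.card_eq_sum_card_fiberwise fun q hq => (Finset.mem_filter.mp hq).2
    have heq : ∀ t ∈ V, (T.filter fun q => val a q.1 = t) =
        ((GP n a k).filter fun q => val a q.1 = t) := by
      intro t ht
      ext q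
      simp only [hT, Finset.mem_filter]
      constructor
      · rintro ⟨⟨hg, _⟩, hv⟩; exact ⟨hg, hv⟩
      · rintro ⟨hg, hv⟩; exact ⟨⟨hg, by rw [hv]; exact ht⟩, hv⟩
    calc (∑ t ∈ V, ((GP n a k).filter fun q => val a q.1 = t).card)
        = ∑ t ∈ V, (T.filter fun q => val a q.1 = t).card := by
          refine Finset.sum_congr rfl fun t ht => ?_
          rw [heq t ht]
      _ = T.card := hTc.symm
      _ ≤ (GP n a k).card := Finset.card_le_card (Finset.filter_subset _ _)
  calc M n a k ≤ ∑ t ∈ V, 4 * ((SPt n a t).filter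
        fun q => ¬ 8*n < k*(alp q + bet q)).card := h2
    _ = 4 * ∑ t ∈ V, ((SPt n a t).filter
        fun q => ¬ 8*n < k*(alp q + bet q)).card := by rw [Finset.mul_sum]
    _ ≤ 4 * ∑ t ∈ V, ((GP n a k).filter fun q => val a q.1 = t).card := by
        refine Nat.mul_le_mul_left 4 (Finset.sum_le_sum fun t ht => ?_)
        exact Finset.card_le_card (h3 t ht)
    _ ≤ 4 * (GP n a k).card := Nat.mul_le_mul_left 4 h4

lemma GP_card (hm : Mono n a) (hc : Convexa n a) {k : ℕ} (hk : 1 ≤ k) :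
    (GP n a k).card ≤ n * (8*n/k) * (8*n/k) := by
  classical
  set m := 8*n/k with hmdef
  have hstair : ∀ q ∈ GP n a k, q.2.1 < q.1.1 ∧ q.2.2 < q.1.2 ∧
      q.1 ∈ W n ∧ q.2 ∈ W n ∧ val a q.2 = val a q.1 ∧
      k * (alp q + bet q) ≤ 8*n := by
    intro q hq
    simp only [GP, SP, Finset.mem_filter, Finset.mem_product] at hq
    obtain ⟨⟨⟨hq1, hq2⟩, hv, hs⟩, _, hgood⟩ := hq
    have := staircase hm hc hq1 hq2 hv.symm hs.1
    exact ⟨this.1, this.2, hq1, hq2, hv, hgood⟩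
  have hinj : Set.InjOn (fun q : (ℕ × ℕ) × (ℕ × ℕ) => (q.2.1, (alp q, bet q)))
      ↑(GP n a k) := by
    intro q hq qt hqt hfeq
    simp only [Finset.mem_coe] at hq hqt
    obtain ⟨hs1, hs2, hqW1, hqW2, hqv, _⟩ := hstair q hq
    obtain ⟨ht1, ht2, htW1, htW2, htv, _⟩ := hstair qt hqt
    have hfeq' : q.2.1 = qt.2.1 ∧ alp q = alp qt ∧ bet q = bet qt := by
      simpa [Prod.ext_iff] using hfeq
    obtain ⟨h21, halp, hbet⟩ := hfeq'
    simp only [alp, bet] at halp hbet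
    have h11 : q.1.1 = qt.1.1 := by omega
    have hq12 : q.1.2 = q.2.2 + bet q := by simp only [bet]; omega
    have ht12 : qt.1.2 = qt.2.2 + bet q := by simp only [bet]; omega
    have hvq : a (q.2.2 + bet q) - a q.2.2 = a q.1.1 - a q.2.1 := by
      simp only [val] at hqv
      rw [← hq12]; linarith
    have hvt : a (qt.2.2 + bet q) - a qt.2.2 = a q.1.1 - a q.2.1 := by
      simp only [val] at htv
      rw [← ht12, h11, h21]; linarith
    have hb1 : 1 ≤ bet q := by simp only [bet]; omega
    have hq2n : q.2.2 + bet q < n := by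
      rw [← hq12]; exact (mem_W.mp hqW1).2
    have ht2n : qt.2.2 + bet q < n := by
      rw [← ht12]; exact (mem_W.mp htW1).2
    have h22 : q.2.2 = qt.2.2 :=
      shift_unique hm hc hb1 hq2n ht2n (by rw [hvq, hvt])
    have h12 : q.1.2 = qt.1.2 := by rw [hq12, ht12, h22]
    exact Prod.ext (Prod.ext h11 h12) (Prod.ext h21 h22)
  have hmaps : ∀ q ∈ GP n a k, (fun q : (ℕ × ℕ) × (ℕ × ℕ) => (q.2.1, (alp q, bet q))) q ∈
      Finset.range n ×ˢ (Finset.Icc 1 m ×ˢ Finset.Icc 1 m) := by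
    intro q hq
    obtain ⟨hs1, hs2, hqW1, hqW2, _, hgood⟩ := hstair q hq
    have hq21 : q.2.1 < n := by
      have := (mem_W.mp hqW2).1
      have := (mem_W.mp hqW2).2
      omega
    have halpm : alp q ≤ m := by
      rw [hmdef, Nat.le_div_iff_mul_le (by omega : 0 < k)]
      calc alp q * k = k * alp q := Nat.mul_comm _ _
        _ ≤ k * (alp q + bet q) := Nat.mul_le_mul_left k (by omega)
        _ ≤ 8*n := hgood
    have hbetm : bet q ≤ m := by
      rw [hmdef, Nat.le_div_iff_mul_le (by omega : 0 < k)]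
      calc bet q * k = k * bet q := Nat.mul_comm _ _
        _ ≤ k * (alp q + bet q) := Nat.mul_le_mul_left k (by omega)
        _ ≤ 8*n := hgood
    simp only [Finset.mem_product, Finset.mem_range, Finset.mem_Icc]
    refine ⟨hq21, ⟨?_, halpm⟩, ⟨?_, hbetm⟩⟩
    · simp only [alp]; omega
    · simp only [bet]; omega
  have := Finset.card_le_card_of_injOn _ hmaps hinj
  calc (GP n a k).card ≤ (Finset.range n ×ˢ (Finset.Icc 1 m ×ˢ Finset.Icc 1 m)).card := this
    _ = n * (m * m) := by
        simp [Finset.card_product, Nat.card_Icc]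
    _ = n * m * m := by ring

lemma P2_eq_sum_mult (hm : Mono n a) :
    (P2set n a).card = ∑ w ∈ W n, mult n a w := by
  classical
  have h1 : (P2set n a).card = ∑ w ∈ W n, ((P2set n a).filter fun q => q.1 = w).card :=
    Finset.card_eq_sum_card_fiberwise fun q hq => by
      simp only [Finset.mem_coe, P2set, Finset.mem_filter, Finset.mem_product] at hq
      exact hq.1.1
  rw [h1]
  refine Finset.sum_congr rfl fun w hw => ?_
  rw [mult]
  refine Finset.card_bij (fun q _ => q.2) ?_ ?_ ?_
  · intro q hq
    simp only [P2set, Finset.mem_filter, Finset.mem_product] at hq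
    rw [mem_Fibt]
    exact ⟨hq.1.1.2, by rw [hq.1.2, hq.2]⟩
  · intro q hq qt hqt h2
    simp only [P2set, Finset.mem_filter, Finset.mem_product] at hq hqt
    exact Prod.ext (hq.2.trans hqt.2.symm) h2
  · intro w' hw'
    rw [mem_Fibt] at hw'
    refine ⟨(w, w'), Finset.mem_filter.mpr ⟨?_, rfl⟩, rfl⟩
    simp only [P2set, Finset.mem_filter, Finset.mem_product]
    exact ⟨⟨hw, hw'.1⟩, hw'.2⟩

lemma sum_mult_eq (hm : Mono n a) (hc : Convexa n a) :
    (∑ w ∈ W n, mult n a w) = ∑ k ∈ Finset.Icc 1 n, M n a k := by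
  classical
  have hper : ∀ w ∈ W n, mult n a w =
      ∑ k ∈ Finset.Icc 1 n, if k ≤ mult n a w then 1 else 0 := by
    intro w hw
    have h1 : ((Finset.Icc 1 n).filter fun k => k ≤ mult n a w) =
        Finset.Icc 1 (mult n a w) := by
      ext k
      simp only [Finset.mem_filter, Finset.mem_Icc]
      have := mult_le hm hc w
      constructor
      · rintro ⟨⟨ha', _⟩, hb⟩; exact ⟨ha', hb⟩
      · rintro ⟨ha', hb⟩; exact ⟨⟨ha', by omega⟩, hb⟩
    calc mult n a w = (Finset.Icc 1 (mult n a w)).card := by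
          rw [Nat.card_Icc]; omega
      _ = ((Finset.Icc 1 n).filter fun k => k ≤ mult n a w).card := by rw [h1]
      _ = ∑ k ∈ Finset.Icc 1 n, if k ≤ mult n a w then 1 else 0 :=
          Finset.card_filter _ _
  calc (∑ w ∈ W n, mult n a w)
      = ∑ w ∈ W n, ∑ k ∈ Finset.Icc 1 n, if k ≤ mult n a w then 1 else 0 :=
        Finset.sum_congr rfl hper
    _ = ∑ k ∈ Finset.Icc 1 n, ∑ w ∈ W n, if k ≤ mult n a w then 1 else 0 :=
        Finset.sum_comm
    _ = ∑ k ∈ Finset.Icc 1 n, M n a k := by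
        refine Finset.sum_congr rfl fun k _ => ?_
        rw [M, Hk, Finset.card_filter]

lemma Qd_le (hm : Mono n a) (hc : Convexa n a) :
    (Qd n a).card ≤ n*n + 2 * (P2set n a).card := by
  classical
  set S := Qd n a with hS
  have hmem : ∀ p ∈ S, p.1.1 < n ∧ p.1.2 < n ∧ p.2.1 < n ∧ p.2.2 < n ∧
      a p.1.1 + a p.1.2 = a p.2.1 + a p.2.2 := by
    intro p hp
    simp only [hS, Qd, Finset.mem_filter, Finset.mem_product, Finset.mem_range] at hp
    exact ⟨hp.1.1.1, hp.1.1.2, hp.1.2.1, hp.1.2.2, hp.2⟩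
  have hsplit1 : S.card = (S.filter fun p => p.1.1 < p.2.1).card +
      (S.filter fun p => ¬ p.1.1 < p.2.1).card :=
    (Finset.card_filter_add_card_filter_not _).symm
  have hsplit2 : (S.filter fun p => ¬ p.1.1 < p.2.1).card =
      ((S.filter fun p => ¬ p.1.1 < p.2.1).filter fun p => p.2.1 < p.1.1).card +
      ((S.filter fun p => ¬ p.1.1 < p.2.1).filter fun p => ¬ p.2.1 < p.1.1).card :=
    (Finset.card_filter_add_card_filter_not _).symm
  have hb1 : (S.filter fun p => p.1.1 < p.2.1).card ≤ (P2set n a).card := by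
    refine Finset.card_le_card_of_injOn
      (fun p => ((p.1.1, p.2.1), (p.2.2, p.1.2))) ?_ ?_
    · intro p hp
      have hplt := (Finset.mem_filter.mp hp).2
      obtain ⟨h1, h2, h3, h4, heq⟩ := hmem p (Finset.mem_filter.mp hp).1
      have hwy : p.2.2 < p.1.2 := by
        by_contra hcon
        push_neg at hcon
        have := mono_le hm hcon h4
        have := hm _ _ hplt h3
        linarith
      simp only [Finset.mem_coe, P2set, Finset.mem_filter, Finset.mem_product]
      refine ⟨⟨mem_W.mpr ⟨hplt, h3⟩, mem_W.mpr ⟨hwy, h2⟩⟩, ?_⟩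
      simp only [val]
      linarith
    · intro p hp pt hpt hfeq
      simp only [Prod.mk.injEq] at hfeq
      obtain ⟨⟨e1, e2⟩, e3, e4⟩ := hfeq
      exact Prod.ext (Prod.ext e1 e4) (Prod.ext e2 e3)
  have hb2 : ((S.filter fun p => ¬ p.1.1 < p.2.1).filter fun p => p.2.1 < p.1.1).card ≤
      (P2set n a).card := by
    refine Finset.card_le_card_of_injOn
      (fun p => ((p.2.1, p.1.1), (p.1.2, p.2.2))) ?_ ?_
    · intro p hp
      have hplt := (Finset.mem_filter.mp hp).2
      obtain ⟨h1, h2, h3, h4, heq⟩ := hmem p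
        (Finset.mem_filter.mp (Finset.mem_filter.mp hp).1).1
      have hwy : p.1.2 < p.2.2 := by
        by_contra hcon
        push_neg at hcon
        have := mono_le hm hcon h2
        have := hm _ _ hplt h1
        linarith
      simp only [Finset.mem_coe, P2set, Finset.mem_filter, Finset.mem_product]
      refine ⟨⟨mem_W.mpr ⟨hplt, h1⟩, mem_W.mpr ⟨hwy, h4⟩⟩, ?_⟩
      simp only [val]
      linarith
    · intro p hp pt hpt hfeq
      simp only [Prod.mk.injEq] at hfeq
      obtain ⟨⟨e1, e2⟩, e3, e4⟩ := hfeq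
      exact Prod.ext (Prod.ext e2 e3) (Prod.ext e1 e4)
  have hb3 : ((S.filter fun p => ¬ p.1.1 < p.2.1).filter fun p => ¬ p.2.1 < p.1.1).card ≤
      (Finset.range n ×ˢ Finset.range n).card := by
    refine Finset.card_le_card_of_injOn (fun p => p.1) ?_ ?_
    · intro p hp
      obtain ⟨h1, h2, _, _, _⟩ := hmem p
        (Finset.mem_filter.mp (Finset.mem_filter.mp hp).1).1
      simp only [Finset.mem_coe, Finset.mem_product, Finset.mem_range]
      exact ⟨h1, h2⟩
    · intro p hp pt hpt hfeq
      rw [Finset.mem_coe, Finset.mem_filter] at hp hpt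
      obtain ⟨hpf, hp2⟩ := hp
      obtain ⟨hptf, hpt2⟩ := hpt
      rw [Finset.mem_filter] at hpf hptf
      obtain ⟨hpS, hp1⟩ := hpf
      obtain ⟨hptS, hpt1⟩ := hptf
      obtain ⟨h1, h2, h3, h4, heq⟩ := hmem p hpS
      obtain ⟨g1, g2, g3, g4, geq⟩ := hmem pt hptS
      have hxz : p.1.1 = p.2.1 := by omega
      have hxzt : pt.1.1 = pt.2.1 := by omega
      have hyw : p.1.2 = p.2.2 := by
        apply a_inj hm h2 h4
        rw [hxz] at heq
        linarith
      have hywt : pt.1.2 = pt.2.2 := by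
        apply a_inj hm g2 g4
        rw [hxzt] at geq
        linarith
      have hp2eq : p.2 = p.1 := Prod.ext hxz.symm hyw.symm
      have hpt2eq : pt.2 = pt.1 := Prod.ext hxzt.symm hywt.symm
      have hfeq' : p.1 = pt.1 := hfeq
      exact Prod.ext hfeq' (by rw [hp2eq, hpt2eq]; exact hfeq')
  have hcardrn : (Finset.range n ×ˢ Finset.range n).card = n * n := by
    simp [Finset.card_product]
  omega

end Global

lemma M_le_GPbound {n : ℕ} {a : ℕ → ℝ} (hm : Mono n a) (hc : Convexa n a)
    {k : ℕ} (hk : 2 ≤ k) (hn : 1 ≤ n) :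
    M n a k ≤ 4 * (n * (8*n/k) * (8*n/k)) :=
  (M_le_GP hm hc hk hn).trans (Nat.mul_le_mul_left 4 (GP_card hm hc (by omega)))

section Final
variable {n : ℕ} {a : ℕ → ℝ}

lemma M_triv (k : ℕ) : M n a k ≤ n * n := by
  calc M n a k ≤ (W n).card := Finset.card_filter_le _ _
    _ ≤ (Finset.range n ×ˢ Finset.range n).card := Finset.card_filter_le _ _
    _ = n * n := by simp

lemma tailsum {K : ℕ} (hK : 1 ≤ K) :
    ∀ b : ℕ, K ≤ b → (∑ k ∈ Finset.Ioc K b, (1:ℝ)/(k:ℝ)^2) ≤ 1/K - 1/b := by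
  intro b hb
  induction b, hb using Nat.le_induction with
  | base =>
      simp
  | succ b hKb ih =>
      rw [Finset.sum_Ioc_succ_top hKb]
      have hb1 : (1:ℝ) ≤ (b:ℝ) := by exact_mod_cast hK.trans hKb
      have hb0 : (0:ℝ) < b := by linarith
      have hb10 : (0:ℝ) < (b:ℝ) + 1 := by linarith
      have hstep : (1:ℝ)/((b:ℝ)+1)^2 ≤ 1/b - 1/((b:ℝ)+1) := by
        rw [div_sub_div _ _ (ne_of_gt hb0) (ne_of_gt hb10)]
        rw [div_le_div_iff₀ (by positivity) (by positivity)]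
        ring_nf
        nlinarith
      push_cast
      push_cast at ih
      linarith

lemma tailsum' {K b : ℕ} (hK : 1 ≤ K) :
    (∑ k ∈ Finset.Ioc K b, (1:ℝ)/(k:ℝ)^2) ≤ 1/K := by
  rcases le_or_gt K b with h | h
  · have := tailsum hK b h
    have hb : (0:ℝ) ≤ 1/(b:ℝ) := by positivity
    linarith
  · rw [Finset.Ioc_eq_empty (by omega)]
    simp


lemma final_count (hm : Mono n a) (hc : Convexa n a) (hn : 1 ≤ n) :
    ((Qd n a).card : ℝ) ≤ 1027 * Real.sqrt n ^ 5 := by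
  classical
  set K := Nat.sqrt n with hKdef
  have hK1 : 1 ≤ K := Nat.sqrt_pos.mpr hn
  have hKn : K ≤ n := Nat.sqrt_le_self n
  set s := Real.sqrt n with hsdef
  have hs0 : 0 ≤ s := Real.sqrt_nonneg _
  have hs2 : s^2 = (n:ℝ) := Real.sq_sqrt (by positivity)
  have hn1R : (1:ℝ) ≤ (n:ℝ) := by exact_mod_cast hn
  have hs1 : 1 ≤ s := by nlinarith
  have hsp : 0 < s := by linarith
  have hKR : (0:ℝ) < (K:ℝ) := by exact_mod_cast hK1
  -- split the sum
  have hsplitsum : (∑ k ∈ Finset.Icc 1 n, M n a k) =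
      (∑ k ∈ Finset.Ioc 0 K, M n a k) + ∑ k ∈ Finset.Ioc K n, M n a k := by
    rw [Finset.sum_Ioc_consecutive _ (Nat.zero_le K) hKn, ← Finset.Icc_add_one_left_eq_Ioc, zero_add]
  -- first chunk
  have hchunk1 : ((∑ k ∈ Finset.Ioc 0 K, M n a k : ℕ) : ℝ) ≤ (K:ℝ) * (n:ℝ)^2 := by
    have h1 : (∑ k ∈ Finset.Ioc 0 K, M n a k) ≤ (Finset.Ioc 0 K).card • (n*n) :=
      Finset.sum_le_card_nsmul _ _ _ (fun k _ => M_triv k)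
    have h2 : (Finset.Ioc 0 K).card = K := by simp
    rw [h2, smul_eq_mul] at h1
    calc ((∑ k ∈ Finset.Ioc 0 K, M n a k : ℕ) : ℝ) ≤ ((K * (n*n) : ℕ) : ℝ) := by
          exact_mod_cast h1
      _ = (K:ℝ) * (n:ℝ)^2 := by push_cast; ring
  -- second chunk
  have hterm : ∀ k ∈ Finset.Ioc K n, ((M n a k : ℕ) : ℝ) ≤
      256 * (n:ℝ)^3 * ((1:ℝ)/(k:ℝ)^2) := by
    intro k hk
    rw [Finset.mem_Ioc] at hk
    have hk2 : 2 ≤ k := by omega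
    have hkR : (0:ℝ) < (k:ℝ) := by exact_mod_cast (by omega : 0 < k)
    have h1 := M_le_GPbound hm hc (k := k) hk2 hn
    have hdiv : ((8*n/k : ℕ) : ℝ) ≤ (8*(n:ℝ))/(k:ℝ) := by
      have h := Nat.cast_div_le (m := 8*n) (n := k) (α := ℝ)
      push_cast at h
      exact h
    have hx0 : (0:ℝ) ≤ ((8*n/k : ℕ) : ℝ) := by positivity
    have hn0R : (0:ℝ) ≤ (n:ℝ) := by positivity
    calc ((M n a k : ℕ) : ℝ) ≤ ((4 * (n * (8*n/k) * (8*n/k)) : ℕ) : ℝ) := by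
          exact_mod_cast h1
      _ = 4 * (n:ℝ) * ((8*n/k : ℕ) : ℝ) * ((8*n/k : ℕ) : ℝ) := by push_cast; ring
      _ ≤ 4 * (n:ℝ) * (8*(n:ℝ)/(k:ℝ)) * (8*(n:ℝ)/(k:ℝ)) := by
          have hy0 : (0:ℝ) ≤ 8*(n:ℝ)/(k:ℝ) := by positivity
          have hXX : ((8*n/k : ℕ) : ℝ) * ((8*n/k : ℕ) : ℝ) ≤
              (8*(n:ℝ)/(k:ℝ)) * (8*(n:ℝ)/(k:ℝ)) := mul_le_mul hdiv hdiv hx0 hy0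
          calc 4 * (n:ℝ) * ((8*n/k : ℕ) : ℝ) * ((8*n/k : ℕ) : ℝ)
              = 4 * (n:ℝ) * (((8*n/k : ℕ) : ℝ) * ((8*n/k : ℕ) : ℝ)) := by ring
            _ ≤ 4 * (n:ℝ) * ((8*(n:ℝ)/(k:ℝ)) * (8*(n:ℝ)/(k:ℝ))) :=
                mul_le_mul_of_nonneg_left hXX (by positivity)
            _ = 4 * (n:ℝ) * (8*(n:ℝ)/(k:ℝ)) * (8*(n:ℝ)/(k:ℝ)) := by ring
      _ = 256 * (n:ℝ)^3 * ((1:ℝ)/(k:ℝ)^2) := by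
          field_simp
          ring
  have hchunk2 : ((∑ k ∈ Finset.Ioc K n, M n a k : ℕ) : ℝ) ≤
      256 * (n:ℝ)^3 * (1/(K:ℝ)) := by
    calc ((∑ k ∈ Finset.Ioc K n, M n a k : ℕ) : ℝ)
        = ∑ k ∈ Finset.Ioc K n, ((M n a k : ℕ) : ℝ) := Nat.cast_sum _ _
      _ ≤ ∑ k ∈ Finset.Ioc K n, 256 * (n:ℝ)^3 * ((1:ℝ)/(k:ℝ)^2) :=
          Finset.sum_le_sum hterm
      _ = 256 * (n:ℝ)^3 * ∑ k ∈ Finset.Ioc K n, (1:ℝ)/(k:ℝ)^2 := by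
          rw [Finset.mul_sum]
      _ ≤ 256 * (n:ℝ)^3 * (1/(K:ℝ)) := by
          have h := tailsum' (K := K) (b := n) hK1
          have hpos : (0:ℝ) ≤ 256 * (n:ℝ)^3 := by positivity
          exact mul_le_mul_of_nonneg_left h hpos
  -- bounds on K vs s
  have hK1R : (1:ℝ) ≤ (K:ℝ) := by exact_mod_cast hK1
  have hKs : (K:ℝ) ≤ s := by
    rw [hsdef, Real.le_sqrt (by positivity) (by positivity)]
    exact_mod_cast Nat.sqrt_le' n
  have hsK : s ≤ 2*(K:ℝ) := by
    have h1 : s < (K:ℝ) + 1 := by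
      rw [hsdef, Real.sqrt_lt' (by positivity)]
      have hnat : n < (K+1)*(K+1) := Nat.lt_succ_sqrt n
      have hcast : (n:ℝ) < ((K:ℝ)+1)*((K:ℝ)+1) := by exact_mod_cast hnat
      nlinarith
    linarith
  have hinvK : (1:ℝ)/(K:ℝ) ≤ 2/s := by
    rw [div_le_div_iff₀ hKR hsp]
    linarith
  -- assemble
  have hQd := Qd_le hm hc
  have hP2 : ((P2set n a).card : ℕ) = ∑ k ∈ Finset.Icc 1 n, M n a k := by
    rw [P2_eq_sum_mult hm, sum_mult_eq hm hc]
  have hcast : ((Qd n a).card : ℝ) ≤ (n:ℝ)^2 +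
      2 * (((∑ k ∈ Finset.Ioc 0 K, M n a k : ℕ) : ℝ) +
        ((∑ k ∈ Finset.Ioc K n, M n a k : ℕ) : ℝ)) := by
    have h1 : (Qd n a).card ≤ n*n + 2 * ((∑ k ∈ Finset.Ioc 0 K, M n a k) +
        ∑ k ∈ Finset.Ioc K n, M n a k) := by
      rw [← hsplitsum, ← hP2]
      exact hQd
    calc ((Qd n a).card : ℝ) ≤ ((n*n + 2 * ((∑ k ∈ Finset.Ioc 0 K, M n a k) +
        ∑ k ∈ Finset.Ioc K n, M n a k) : ℕ) : ℝ) := by exact_mod_cast h1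
      _ = (n:ℝ)^2 + 2 * (((∑ k ∈ Finset.Ioc 0 K, M n a k : ℕ) : ℝ) +
        ((∑ k ∈ Finset.Ioc K n, M n a k : ℕ) : ℝ)) := by push_cast; ring
  have e1 : (n:ℝ)^2 = s^4 := by rw [← hs2]; ring
  have e2 : (n:ℝ)^3 = s^6 := by rw [← hs2]; ring
  have hfin : ((Qd n a).card : ℝ) ≤ s^4 + 2*s^5 + 1024*s^5 := by
    have hb1 : (K:ℝ) * (n:ℝ)^2 ≤ s^5 := by
      rw [e1]
      calc (K:ℝ) * s^4 ≤ s * s^4 := by nlinarith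
        _ = s^5 := by ring
    have hb2 : 256 * (n:ℝ)^3 * (1/(K:ℝ)) ≤ 512 * s^5 := by
      calc 256 * (n:ℝ)^3 * (1/(K:ℝ)) ≤ 256 * (n:ℝ)^3 * (2/s) := by
            have : (0:ℝ) ≤ 256 * (n:ℝ)^3 := by positivity
            exact mul_le_mul_of_nonneg_left hinvK this
        _ = 512 * s^5 := by
            rw [e2]
            field_simp
            ring
    calc ((Qd n a).card : ℝ) ≤ (n:ℝ)^2 +
        2 * (((∑ k ∈ Finset.Ioc 0 K, M n a k : ℕ) : ℝ) +
          ((∑ k ∈ Finset.Ioc K n, M n a k : ℕ) : ℝ)) := hcast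
      _ ≤ s^4 + 2 * (s^5 + 512 * s^5) := by
          rw [← e1]
          have := hchunk1.trans hb1
          have := hchunk2.trans hb2
          rw [e1]
          linarith
      _ = s^4 + 2*s^5 + 1024*s^5 := by ring
  have hs45 : s^4 ≤ s^5 := by
    calc s^4 = s^4 * 1 := by ring
      _ ≤ s^4 * s := by nlinarith
      _ = s^5 := by ring
  linarith

end Final

lemma card_transfer {A : Finset ℝ} {a : ℕ → ℝ} (hm : Mono A.card a)
    (hA : A = (Finset.range A.card).image a) :
    (((A ×ˢ A) ×ˢ (A ×ˢ A)).filter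
      (fun p => p.1.1 + p.1.2 = p.2.1 + p.2.2)).card = (Qd A.card a).card := by
  classical
  set n := A.card with hn
  refine (Finset.card_bij
    (fun (p : (ℕ × ℕ) × (ℕ × ℕ)) (_ : p ∈ Qd n a) =>
      ((a p.1.1, a p.1.2), (a p.2.1, a p.2.2))) ?_ ?_ ?_).symm
  · intro p hp
    simp only [Qd, Finset.mem_filter, Finset.mem_product, Finset.mem_range] at hp
    obtain ⟨⟨⟨h1, h2⟩, h3, h4⟩, heq⟩ := hp
    have hmem : ∀ i, i < n → a i ∈ A := by
      intro i hi
      rw [hA]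
      exact Finset.mem_image_of_mem a (Finset.mem_range.mpr hi)
    simp only [Finset.mem_filter, Finset.mem_product]
    exact ⟨⟨⟨hmem _ h1, hmem _ h2⟩, hmem _ h3, hmem _ h4⟩, heq⟩
  · intro p hp pt hpt hfeq
    simp only [Qd, Finset.mem_filter, Finset.mem_product, Finset.mem_range] at hp hpt
    obtain ⟨⟨⟨h1, h2⟩, h3, h4⟩, _⟩ := hp
    obtain ⟨⟨⟨g1, g2⟩, g3, g4⟩, _⟩ := hpt
    simp only [Prod.mk.injEq] at hfeq
    obtain ⟨⟨e1, e2⟩, e3, e4⟩ := hfeq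
    exact Prod.ext (Prod.ext (a_inj hm h1 g1 e1) (a_inj hm h2 g2 e2))
      (Prod.ext (a_inj hm h3 g3 e3) (a_inj hm h4 g4 e4))
  · intro y hy
    simp only [Finset.mem_filter, Finset.mem_product] at hy
    obtain ⟨⟨⟨m1, m2⟩, m3, m4⟩, heq⟩ := hy
    rw [hA] at m1 m2 m3 m4
    obtain ⟨i1, hi1, e1⟩ := Finset.mem_image.mp m1
    obtain ⟨i2, hi2, e2⟩ := Finset.mem_image.mp m2
    obtain ⟨i3, hi3, e3⟩ := Finset.mem_image.mp m3
    obtain ⟨i4, hi4, e4⟩ := Finset.mem_image.mp m4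
    refine ⟨((i1, i2), (i3, i4)), ?_, ?_⟩
    · simp only [Qd, Finset.mem_filter, Finset.mem_product, Finset.mem_range]
      rw [Finset.mem_range] at hi1 hi2 hi3 hi4
      refine ⟨⟨⟨hi1, hi2⟩, hi3, hi4⟩, ?_⟩
      rw [e1, e2, e3, e4]
      exact heq
    · rw [Prod.ext_iff, Prod.ext_iff, Prod.ext_iff]
      exact ⟨⟨e1, e2⟩, e3, e4⟩

lemma rpow_52 (n : ℕ) : (n:ℝ) ^ ((5:ℝ)/2) = Real.sqrt n ^ 5 := by
  have h0 : (0:ℝ) ≤ (n:ℝ) := by positivity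
  calc (n:ℝ) ^ ((5:ℝ)/2) = (n:ℝ) ^ ((1:ℝ)/2 * (5:ℕ)) := by norm_num
    _ = ((n:ℝ) ^ ((1:ℝ)/2)) ^ ((5:ℕ):ℝ) := Real.rpow_mul h0 _ _
    _ = ((n:ℝ) ^ ((1:ℝ)/2)) ^ (5:ℕ) := Real.rpow_natCast _ 5
    _ = Real.sqrt n ^ 5 := by rw [← Real.sqrt_eq_rpow]


end Stmt11Aux


/-- A finite set of reals is convex if, listed in increasing order, its
consecutive differences are strictly increasing. -/
def IsConvexFinset (A : Finset ℝ) : Prop :=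
  ∃ a : ℕ → ℝ,
    (∀ i j, i < j → j < A.card → a i < a j) ∧
    (∀ i, i + 2 < A.card → a (i + 1) - a i < a (i + 2) - a (i + 1)) ∧
    A = (Finset.range A.card).image a

/-- Konyagin–Garaev: for a convex set `A` of `N` reals,
`E(A) ≤ C N^{5/2}`. -/
theorem stmt11 :
    ∃ C : ℝ, 0 < C ∧ ∀ A : Finset ℝ, IsConvexFinset A →
      ((((A ×ˢ A) ×ˢ (A ×ˢ A)).filter
          (fun p => p.1.1 + p.1.2 = p.2.1 + p.2.2)).card : ℝ) ≤
        C * (A.card : ℝ) ^ ((5 : ℝ) / 2) := by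
  refine ⟨1100, by norm_num, ?_⟩
  intro A hconv
  obtain ⟨a, hm, hc, hA⟩ := hconv
  have hm' : Stmt11Aux.Mono A.card a := hm
  have hc' : Stmt11Aux.Convexa A.card a := hc
  have htrans := Stmt11Aux.card_transfer hm' hA
  rcases Nat.eq_zero_or_pos A.card with h0 | hpos
  · have hAempty : A = ∅ := Finset.card_eq_zero.mp h0
    subst hAempty
    simp only [Finset.product_empty, Finset.empty_product, Finset.filter_empty,
      Finset.card_empty, Nat.cast_zero]
    positivity
  · have hfc := Stmt11Aux.final_count hm' hc' hpos
    rw [Stmt11Aux.rpow_52]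
    calc ((((A ×ˢ A) ×ˢ (A ×ˢ A)).filter
          (fun p => p.1.1 + p.1.2 = p.2.1 + p.2.2)).card : ℝ)
        = ((Stmt11Aux.Qd A.card a).card : ℝ) := by rw [htrans]
      _ ≤ 1027 * Real.sqrt A.card ^ 5 := hfc
      _ ≤ 1100 * Real.sqrt A.card ^ 5 := by
          have : (0:ℝ) ≤ Real.sqrt A.card ^ 5 := pow_nonneg (Real.sqrt_nonneg _) 5
          nlinarith
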